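/- Let G be a group and let d : ℂ[G] → ℓ^∞(G) be a derivation (with respect to the convolution bimodule structure) which is bounded from the supremum norm on ℂ[G] to the supremum norm on ℓ^∞(G), i.e. there exists M such that sup_{u∈G} |(d x)(u)| ≤ M·‖x‖_s for all x ∈ ℂ[G]. Then d is quasi-inner: (d δ_t)(g·t) = 0 for all g, t ∈ G with g·t = t·g. -/

import Mathlib

/-- Left action of the group ring `ℂ[G]` on functions `G → ℂ` by convolution. -/
noncomputable def convL (G : Type*) [Group G] (x : MonoidAlgebra ℂ G) (f : G → ℂ) : G → ℂ :=
  fun u => ∑ g ∈ x.coeff.support, x.coeff g * f (g⁻¹ * u)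

/-- Right action of the group ring `ℂ[G]` on functions `G → ℂ` by convolution. -/
noncomputable def convR (G : Type*) [Group G] (f : G → ℂ) (x : MonoidAlgebra ℂ G) : G → ℂ :=
  fun u => ∑ g ∈ x.coeff.support, f (u * g⁻¹) * x.coeff g

/-- The supremum norm on the group ring `ℂ[G]`. -/
noncomputable def supNorm {G : Type*} [Group G] (x : MonoidAlgebra ℂ G) : ℝ :=
  ⨆ g, ‖x.coeff g‖

/-- Every derivation `d : ℂ[G] → ℓ^∞(G)` which is bounded from the supremum norm to the
supremum norm is quasi-inner: `(d δ_t)(g*t) = 0` whenever `g*t = t*g`. -/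
theorem derivation_into_linfty_quasiInner
    (G : Type*) [Group G]
    (d : MonoidAlgebra ℂ G →ₗ[ℂ] (G → ℂ))
    (hder : ∀ x y : MonoidAlgebra ℂ G, d (x * y) = convR G (d x) y + convL G x (d y))
    -- d is bounded from the supremum norm to the supremum norm (in particular each
    -- `d x` is a bounded function, i.e. lies in ℓ^∞(G))
    (M : ℝ) (hbdd : ∀ (x : MonoidAlgebra ℂ G) (u : G),
      ‖d x u‖ ≤ M * supNorm x) :
    ∀ g t : G, g * t = t * g → d (MonoidAlgebra.single t (1 : ℂ)) (g * t) = 0 := by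
  classical
  intro g t hcomm
  have hcg : Commute g t := hcomm
  set a : MonoidAlgebra ℂ G := MonoidAlgebra.single t 1 with ha
  set c : ℂ := d a (g * t) with hc
  have hsuppa : a.coeff.support = {t} := Finsupp.support_single_ne_zero t one_ne_zero
  have hat : a.coeff t = 1 := by rw [ha, MonoidAlgebra.coeff_single, Finsupp.single_eq_same]
  -- d 1 = 0
  have hone : d (1 : MonoidAlgebra ℂ G) = 0 := by
    have h := hder 1 1
    have hsupp : (1 : MonoidAlgebra ℂ G).coeff.support = {1} := by
      rw [MonoidAlgebra.one_def]
      exact Finsupp.support_single_ne_zero 1 one_ne_zero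
    have hR : convR G (d 1) 1 = d 1 := by
      funext u
      rw [convR, MonoidAlgebra.one_def, MonoidAlgebra.coeff_single, Finsupp.support_single_ne_zero _ one_ne_zero,
        Finset.sum_singleton]
      simp [Finsupp.single_apply]
    have hL : convL G 1 (d 1) = d 1 := by
      funext u
      rw [convL, MonoidAlgebra.one_def, MonoidAlgebra.coeff_single, Finsupp.support_single_ne_zero _ one_ne_zero,
        Finset.sum_singleton]
      simp [Finsupp.single_apply]
    rw [mul_one, hR, hL] at h
    have h2 : d (1 : MonoidAlgebra ℂ G) + 0 = d 1 + d 1 := by rw [add_zero]; exact h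
    exact (add_left_cancel h2).symm
  -- powers
  have hpow : ∀ n : ℕ, a ^ n = MonoidAlgebra.single (t ^ n) (1 : ℂ) := by
    intro n; rw [ha, MonoidAlgebra.single_pow, one_pow]
  have key : ∀ n : ℕ, d (a ^ n) (g * t ^ n) = n * c := by
    intro n
    induction n with
    | zero => simp [hone]
    | succ n ih =>
      have happ := congrFun (hder (a ^ n) a) (g * t ^ (n + 1))
      rw [← pow_succ] at happ
      have hRval : convR G (d (a ^ n)) a (g * t ^ (n + 1)) = n * c := by
        rw [convR, hsuppa, Finset.sum_singleton, hat, mul_one]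
        have : g * t ^ (n + 1) * t⁻¹ = g * t ^ n := by
          rw [pow_succ, ← mul_assoc, mul_assoc, mul_inv_cancel, mul_one]
        rw [this, ih]
      have hLval : convL G (a ^ n) (d a) (g * t ^ (n + 1)) = c := by
        rw [convL, hpow n, MonoidAlgebra.coeff_single, Finsupp.support_single_ne_zero _ one_ne_zero,
          Finset.sum_singleton, Finsupp.single_apply]
        rw [if_pos rfl, one_mul]
        have harg : (t ^ n)⁻¹ * (g * t ^ (n + 1)) = g * t := by
          have hc2 : g * t ^ n = t ^ n * g := hcg.pow_right n
          calc (t ^ n)⁻¹ * (g * t ^ (n + 1))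
              = (t ^ n)⁻¹ * (g * (t ^ n * t)) := by rw [pow_succ]
            _ = (t ^ n)⁻¹ * ((g * t ^ n) * t) := by rw [mul_assoc]
            _ = (t ^ n)⁻¹ * ((t ^ n * g) * t) := by rw [hc2]
            _ = g * t := by group
        rw [harg, hc]
      rw [happ, Pi.add_apply, hRval, hLval]
      push_cast; ring
  -- supNorm of single is 1
  have hsup : ∀ s : G, supNorm (MonoidAlgebra.single s (1 : ℂ)) = 1 := by
    intro s
    have hb : ∀ u : G, ‖(MonoidAlgebra.single s (1 : ℂ)).coeff u‖ ≤ 1 := by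
      intro u
      rw [MonoidAlgebra.coeff_single, Finsupp.single_apply]
      split <;> simp
    apply le_antisymm
    · exact ciSup_le hb
    · have h1 : ‖(MonoidAlgebra.single s (1 : ℂ)).coeff s‖ = 1 := by
        rw [MonoidAlgebra.coeff_single, Finsupp.single_eq_same]; simp
      calc (1 : ℝ) = ‖(MonoidAlgebra.single s (1 : ℂ)).coeff s‖ := h1.symm
        _ ≤ supNorm (MonoidAlgebra.single s (1 : ℂ)) :=
          le_ciSup (f := fun u => ‖(MonoidAlgebra.single s (1 : ℂ)).coeff u‖)
            ⟨1, Set.forall_mem_range.mpr hb⟩ s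
  -- conclude
  have hbound : ∀ n : ℕ, (n : ℝ) * ‖c‖ ≤ M := by
    intro n
    have := hbdd (a ^ n) (g * t ^ n)
    rw [key n, hpow n, hsup, mul_one] at this
    simpa [map_mul, Complex.norm_natCast, abs_of_nonneg] using this
  by_contra hc0
  have hcpos : 0 < ‖c‖ := by
    rw [hc] at hc0
    exact norm_pos_iff.mpr hc0
  obtain ⟨n, hn⟩ := exists_nat_gt (M / ‖c‖)
  have hlt : M < (n : ℝ) * ‖c‖ := by
    rw [div_lt_iff₀ hcpos] at hn; exact hn
  exact absurd (hbound n) (not_le.mpr hlt)
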